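/- Let f: ℝ^d → ℝ be differentiable, g: ℝ^d → ℝ convex, proper, lower semicontinuous, and suppose v* is a global minimizer of f + g. Then for every μ > 0, ∇f(v*) + ∇M_{μg}(v* − μ∇f(v*)) = 0, where M_{μg} is the Moreau envelope of g with parameter μ. -/

import Mathlib

open MeasureTheory Set RealInnerProductSpace

/-- The Moreau envelope of `g` with parameter `μ`. -/
noncomputable def moreau {d : ℕ} (g : EuclideanSpace ℝ (Fin d) → ℝ) (μ : ℝ)
    (v : EuclideanSpace ℝ (Fin d)) : ℝ :=
  ⨅ u : EuclideanSpace ℝ (Fin d), (g u + ‖v - u‖ ^ 2 / (2 * μ))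

/-- If `v*` is a global minimizer of `f + g` with `f` differentiable (with gradient `f'`)
and `g` convex, proper, lsc, then `∇f(v*) + ∇M_{μg}(v* − μ∇f(v*)) = 0` for every `μ > 0`. -/
theorem stmt_1 {d : ℕ} (f g : EuclideanSpace ℝ (Fin d) → ℝ)
    (f' : EuclideanSpace ℝ (Fin d) → EuclideanSpace ℝ (Fin d))
    (hf : ∀ x, HasGradientAt f (f' x) x)
    (hconv : ConvexOn ℝ Set.univ g) (hlsc : LowerSemicontinuous g)
    (vstar : EuclideanSpace ℝ (Fin d))
    (hmin : ∀ v, f vstar + g vstar ≤ f v + g v)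
    (μ : ℝ) (hμ : 0 < μ)
    (Mg : EuclideanSpace ℝ (Fin d) → EuclideanSpace ℝ (Fin d))
    (hMg : ∀ v, HasGradientAt (moreau g μ) (Mg v) v) :
    f' vstar + Mg (vstar - μ • f' vstar) = 0 := by
  set s : EuclideanSpace ℝ (Fin d) := -f' vstar with hs
  set w : EuclideanSpace ℝ (Fin d) := vstar - μ • f' vstar with hwdef
  have hw : w = vstar + μ • s := by
    rw [hwdef, hs, smul_neg]; abel
  -- Step 1: subgradient inequality for g at vstar
  have hsub : ∀ u : EuclideanSpace ℝ (Fin d), g vstar + ⟪s, u - vstar⟫ ≤ g u := by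
    intro u
    set h : EuclideanSpace ℝ (Fin d) := u - vstar with hh
    have hline : HasDerivAt (fun t : ℝ => vstar + t • h) h 0 := by
      simpa using ((hasDerivAt_id (0 : ℝ)).smul_const h).const_add vstar
    have hψ : HasDerivAt (fun t : ℝ => f (vstar + t • h)) ⟪f' vstar, h⟫ 0 := by
      have := (hf (vstar + (0:ℝ) • h)).hasFDerivAt.comp_hasDerivAt 0 hline
      simp at this; exact this
    rw [hasDerivAt_iff_tendsto_slope] at hψ
    have hψ' : Filter.Tendsto (slope (fun t : ℝ => f (vstar + t • h)) 0)
        (nhdsWithin 0 (Set.Ioi 0)) (nhds ⟪f' vstar, h⟫) :=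
      hψ.mono_left (nhdsWithin_mono 0 (fun t ht => by simpa using ne_of_gt ht))
    have hev : ∀ᶠ t in nhdsWithin (0:ℝ) (Set.Ioi 0),
        g vstar - g u ≤ slope (fun t : ℝ => f (vstar + t • h)) 0 t := by
      filter_upwards [Ioc_mem_nhdsGT_of_mem (by norm_num : (0:ℝ) ∈ Set.Ico (0:ℝ) 1)]
        with t ht
      obtain ⟨ht0, ht1⟩ := ht
      have hcvx := hconv.2 (Set.mem_univ vstar) (Set.mem_univ u)
        (by linarith : (0:ℝ) ≤ 1 - t) (le_of_lt ht0) (by ring)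
      have hpt : (1 - t) • vstar + t • u = vstar + t • h := by
        rw [hh]; module
      rw [hpt] at hcvx
      simp only [smul_eq_mul] at hcvx
      have hm := hmin (vstar + t • h)
      have hkey : t * (g vstar - g u) ≤ f (vstar + t • h) - f vstar := by nlinarith
      rw [slope_def_field]
      have h0 : f (vstar + (0:ℝ) • h) = f vstar := by simp
      rw [h0]
      rw [sub_zero, le_div_iff₀ ht0]
      linarith [hkey]
    have hlim : g vstar - g u ≤ ⟪f' vstar, h⟫ := ge_of_tendsto hψ' hev
    have : ⟪s, u - vstar⟫ = -⟪f' vstar, h⟫ := by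
      rw [hs, ← hh, inner_neg_left]
    linarith [hlim, this.le, this.ge]
  -- Step 2: lower bound for the Moreau envelope
  have hterm : ∀ (v u : EuclideanSpace ℝ (Fin d)),
      g vstar + μ * ‖s‖ ^ 2 / 2 + ⟪s, v - w⟫ ≤ g u + ‖v - u‖ ^ 2 / (2 * μ) := by
    intro v u
    have h1 := hsub u
    have hsq : (0:ℝ) ≤ ‖(v - u) - μ • s‖ ^ 2 := sq_nonneg _
    have hexp : ‖(v - u) - μ • s‖ ^ 2
        = ‖v - u‖ ^ 2 - 2 * (μ * ⟪v - u, s⟫) + μ ^ 2 * ‖s‖ ^ 2 := by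
      rw [norm_sub_sq_real, real_inner_smul_right, norm_smul]
      simp [Real.norm_eq_abs, abs_of_pos hμ]
      ring
    have hvw : ⟪s, v - w⟫ = ⟪s, v - vstar⟫ - μ * ‖s‖ ^ 2 := by
      have : v - w = (v - vstar) - μ • s := by rw [hw]; abel
      rw [this, inner_sub_right, real_inner_smul_right, real_inner_self_eq_norm_sq]
    have hsplit : ⟪s, u - vstar⟫ = ⟪s, v - vstar⟫ - ⟪s, v - u⟫ := by
      rw [← inner_sub_right]; congr 1; abel
    have hsym : ⟪s, v - u⟫ = ⟪v - u, s⟫ := real_inner_comm _ _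
    rw [hvw]
    rw [hsplit, hsym] at h1
    rw [hexp] at hsq
    have h2μ : (0:ℝ) < 2 * μ := by linarith
    have hkey : ⟪v - u, s⟫ - μ * ‖s‖ ^ 2 / 2 ≤ ‖v - u‖ ^ 2 / (2 * μ) := by
      rw [le_div_iff₀ h2μ]
      nlinarith [hsq]
    linarith [h1, hkey]
  have hlow : ∀ v : EuclideanSpace ℝ (Fin d), g vstar + μ * ‖s‖ ^ 2 / 2 + ⟪s, v - w⟫ ≤ moreau g μ v :=
    fun v => le_ciInf (fun u => hterm v u)
  -- Step 3: value at w
  have hbdd : BddBelow (Set.range fun u : EuclideanSpace ℝ (Fin d) => g u + ‖w - u‖ ^ 2 / (2 * μ)) := by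
    refine ⟨g vstar + μ * ‖s‖ ^ 2 / 2 + ⟪s, w - w⟫, ?_⟩
    rintro x ⟨u, rfl⟩
    exact hterm w u
  have hMw : moreau g μ w ≤ g vstar + μ * ‖s‖ ^ 2 / 2 := by
    have hle := ciInf_le hbdd vstar
    have hnorm : ‖w - vstar‖ ^ 2 = μ ^ 2 * ‖s‖ ^ 2 := by
      have : w - vstar = μ • s := by rw [hw]; abel
      rw [this, norm_smul, Real.norm_eq_abs, abs_of_pos hμ, mul_pow]
    rw [hnorm] at hle
    calc moreau g μ w ≤ g vstar + μ ^ 2 * ‖s‖ ^ 2 / (2 * μ) := hle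
      _ = g vstar + μ * ‖s‖ ^ 2 / 2 := by field_simp
  -- Step 4: w is a global min of M - ⟪s, ·⟫
  have hminφ : ∀ v : EuclideanSpace ℝ (Fin d), moreau g μ w - ⟪s, w⟫ ≤ moreau g μ v - ⟪s, v⟫ := by
    intro v
    have h1 := hlow v
    have h2 : ⟪s, v - w⟫ = ⟪s, v⟫ - ⟪s, w⟫ := inner_sub_right _ _ _
    rw [h2] at h1
    linarith [hMw]
  -- Step 5: gradient at w vanishes
  have hinner : HasFDerivAt (fun v : EuclideanSpace ℝ (Fin d) => ⟪s, v⟫) (innerSL ℝ s) w := by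
    exact (innerSL ℝ s).hasFDerivAt
  have hφ : HasFDerivAt (fun v : EuclideanSpace ℝ (Fin d) => moreau g μ v - ⟪s, v⟫)
      ((InnerProductSpace.toDual ℝ (EuclideanSpace ℝ (Fin d)) (Mg w)) - innerSL ℝ s) w :=
    (hMg w).hasFDerivAt.sub hinner
  have hlocmin : IsLocalMin (fun v : EuclideanSpace ℝ (Fin d) => moreau g μ v - ⟪s, v⟫) w :=
    Filter.Eventually.of_forall hminφ
  have hzero := hlocmin.hasFDerivAt_eq_zero hφ
  have heq : Mg w = s := by
    apply (InnerProductSpace.toDual ℝ (EuclideanSpace ℝ (Fin d))).injective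
    apply ContinuousLinearMap.ext
    intro y
    have := congrFun (congrArg DFunLike.coe hzero) y
    simp only [ContinuousLinearMap.sub_apply, ContinuousLinearMap.zero_apply,
      sub_eq_zero] at this
    simpa [InnerProductSpace.toDual_apply_apply, innerSL_apply_apply] using this
  rw [← hwdef] at *
  rw [heq, hs]
  abel
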